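/- In the BCK-algebra X'_n (n ≥ 5), the BCK-sequences starting from x = n−1 and y = n satisfy x_k = n−1−k for 1 ≤ k ≤ n−2 (so x_{n-2} = 1), while y_k = n−3 for all k ≥ 1 (so y_{n-2} = n−3); hence x_{n-2} ≠ y_{n-2}. -/
import Mathlib


/-- The operation of the linearly ordered BCK-algebra `X_n` written on natural
numbers: `x*y = 0` if `x ≤ y`, `x*0 = x`, `x*y = 1` if `x = y+1`, and
`x*y = x−y−1` if `x > y+1` and `y ≥ 1`. -/
def natStar (x y : ℕ) : ℕ :=
  if x ≤ y then 0 else if y = 0 then x else if x = y + 1 then 1 else x - y - 1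

/-- The operation of `X'_n = {0, 1, …, n}` written on natural numbers:
`x·y = x*y` for `x, y ≤ n−1`; `n·0 = n`; `n·y = n−y−1` for `1 ≤ y ≤ n−2`;
`n·(n−1) = 1`; `x·n = 0` for every `x ≠ n−1` (in particular `n·n = 0`);
and `(n−1)·n = 1`. -/
def primeVal (n x y : ℕ) : ℕ :=
  if y = n then (if x = n - 1 then 1 else 0)
  else if x = n then (if y = 0 then n else if y = n - 1 then 1 else n - y - 1)
  else natStar x y

theorem natStar_le (x y : ℕ) : natStar x y ≤ x := by
  unfold natStar; split_ifs <;> omega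

theorem primeVal_lt {n x y : ℕ} (hn : 1 ≤ n) (hx : x < n + 1) (hy : y < n + 1) :
    primeVal n x y < n + 1 := by
  have h := natStar_le x y
  unfold primeVal; split_ifs <;> omega

/-- The BCK-algebra operation of `X'_n = {0, 1, …, n}` (for `n ≥ 5`),
as an operation on `Fin (n+1)`. -/
def primeOp {n : ℕ} (hn : 5 ≤ n) (x y : Fin (n + 1)) : Fin (n + 1) :=
  ⟨primeVal n x y, primeVal_lt (by omega) x.isLt y.isLt⟩

/-- The pair of BCK-sequences `(x_k, y_k)` determined by starting elements
`x, y`:  `x_0 = x`, `y_0 = y`, `x_1 = y·(y·x)`, `y_1 = x·(x·y)`, and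
`x_k = x_{k-2}·(x_{k-2}·x_{k-1})`, `y_k = y_{k-2}·(y_{k-2}·y_{k-1})` for `k ≥ 2`. -/
def bckPair {X : Type*} (op : X → X → X) (x y : X) : ℕ → X × X
  | 0 => (x, y)
  | 1 => (op y (op y x), op x (op x y))
  | k + 2 =>
      (op (bckPair op x y k).1 (op (bckPair op x y k).1 (bckPair op x y (k + 1)).1),
       op (bckPair op x y k).2 (op (bckPair op x y k).2 (bckPair op x y (k + 1)).2))

/-- In the BCK-algebra `X'_n` (`n ≥ 5`), the BCK-sequences starting from
`x = n−1` and `y = n` satisfy `x_k = n−1−k` for `1 ≤ k ≤ n−2`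
(so `x_{n-2} = 1`), while `y_k = n−3` for all `k ≥ 1` (so `y_{n-2} = n−3`);
hence `x_{n-2} ≠ y_{n-2}`. -/
theorem primeOp_sequences_differ (n : ℕ) (hn : 5 ≤ n) :
    (∀ k : ℕ, 1 ≤ k → k ≤ n - 2 →
      (((bckPair (primeOp hn) ⟨n - 1, by omega⟩ ⟨n, by omega⟩ k).1 : Fin (n + 1)) : ℕ)
        = n - 1 - k) ∧
    (((bckPair (primeOp hn) ⟨n - 1, by omega⟩ ⟨n, by omega⟩ (n - 2)).1 : Fin (n + 1)) : ℕ)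
        = 1 ∧
    (∀ k : ℕ, 1 ≤ k →
      (((bckPair (primeOp hn) ⟨n - 1, by omega⟩ ⟨n, by omega⟩ k).2 : Fin (n + 1)) : ℕ)
        = n - 3) ∧
    (bckPair (primeOp hn) ⟨n - 1, by omega⟩ ⟨n, by omega⟩ (n - 2)).1 ≠
      (bckPair (primeOp hn) ⟨n - 1, by omega⟩ ⟨n, by omega⟩ (n - 2)).2 := by

  have hopval : ∀ a b : Fin (n + 1),
      ((primeOp hn a b : Fin (n + 1)) : ℕ) = primeVal n (a : ℕ) (b : ℕ) := fun a b => rfl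
  set x0 : Fin (n + 1) := ⟨n - 1, by omega⟩ with hx0
  set y0 : Fin (n + 1) := ⟨n, by omega⟩ with hy0
  have hx0v : (x0 : ℕ) = n - 1 := rfl
  have hy0v : (y0 : ℕ) = n := rfl
  -- key primeVal facts
  have pv1 : ∀ a, 3 ≤ a → a ≤ n - 1 → primeVal n a (a - 1) = 1 := by
    intro a h3 hle; unfold primeVal natStar; split_ifs <;> first | omega | exact ‹False›.elim
  have pv2 : ∀ a, 3 ≤ a → a ≤ n - 1 → primeVal n a 1 = a - 2 := by
    intro a h3 hle; unfold primeVal natStar; split_ifs <;> first | omega | exact ‹False›.elim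
  have hstep : ∀ a, 3 ≤ a → a ≤ n - 1 →
      primeVal n a (primeVal n a (a - 1)) = a - 2 := by
    intro a h3 hle; rw [pv1 a h3 hle]; exact pv2 a h3 hle
  -- X sequence
  have hX : ∀ k, k ≤ n - 2 →
      (((bckPair (primeOp hn) x0 y0 k).1 : Fin (n + 1)) : ℕ) = n - 1 - k := by
    have key : ∀ k,
        (k ≤ n - 2 → (((bckPair (primeOp hn) x0 y0 k).1 : Fin (n + 1)) : ℕ) = n - 1 - k) ∧
        (k + 1 ≤ n - 2 →
          (((bckPair (primeOp hn) x0 y0 (k + 1)).1 : Fin (n + 1)) : ℕ) = n - 1 - (k + 1)) := by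
      intro k
      induction k with
      | zero =>
        refine ⟨fun _ => by simp [bckPair, hx0v], fun _ => ?_⟩
        show ((primeOp hn y0 (primeOp hn y0 x0) : Fin (n + 1)) : ℕ) = n - 1 - 1
        rw [hopval, hopval, hx0v, hy0v]
        unfold primeVal natStar; split_ifs <;> first | omega | exact ‹False›.elim
      | succ k ih =>
        refine ⟨ih.2, fun hk => ?_⟩
        have h1 := ih.1 (by omega)
        have h2 := ih.2 (by omega)
        show ((primeOp hn (bckPair (primeOp hn) x0 y0 k).1
            (primeOp hn (bckPair (primeOp hn) x0 y0 k).1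
              (bckPair (primeOp hn) x0 y0 (k + 1)).1) : Fin (n + 1)) : ℕ) = n - 1 - (k + 2)
        rw [hopval, hopval, h1, h2]
        have ha : n - 1 - (k + 1) = (n - 1 - k) - 1 := by omega
        rw [ha, hstep (n - 1 - k) (by omega) (by omega)]
        omega
    exact fun k hk => (key k).1 hk
  -- Y sequence
  have hY : ∀ k, 1 ≤ k →
      (((bckPair (primeOp hn) x0 y0 k).2 : Fin (n + 1)) : ℕ) = n - 3 := by
    have key : ∀ k,
        (1 ≤ k → (((bckPair (primeOp hn) x0 y0 k).2 : Fin (n + 1)) : ℕ) = n - 3) ∧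
        (1 ≤ k + 1 →
          (((bckPair (primeOp hn) x0 y0 (k + 1)).2 : Fin (n + 1)) : ℕ) = n - 3) := by
      intro k
      induction k with
      | zero =>
        refine ⟨fun h => by omega, fun _ => ?_⟩
        show ((primeOp hn x0 (primeOp hn x0 y0) : Fin (n + 1)) : ℕ) = n - 3
        rw [hopval, hopval, hx0v, hy0v]
        unfold primeVal natStar; split_ifs <;> first | omega | exact ‹False›.elim
      | succ k ih =>
        refine ⟨ih.2, fun _ => ?_⟩
        have h2 := ih.2 (by omega)
        show ((primeOp hn (bckPair (primeOp hn) x0 y0 k).2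
            (primeOp hn (bckPair (primeOp hn) x0 y0 k).2
              (bckPair (primeOp hn) x0 y0 (k + 1)).2) : Fin (n + 1)) : ℕ) = n - 3
        rw [hopval, hopval, h2]
        rcases Nat.eq_zero_or_pos k with rfl | hk
        · have h0 : ((bckPair (primeOp hn) x0 y0 0).2 : ℕ) = n := rfl
          rw [h0]
          have hi : primeVal n n (n - 3) = 2 := by
            unfold primeVal natStar; split_ifs <;> first | omega | exact ‹False›.elim
          rw [hi]
          unfold primeVal natStar; split_ifs <;> first | omega | exact ‹False›.elim
        · rw [ih.1 hk]
          have hi : primeVal n (n - 3) (n - 3) = 0 := by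
            unfold primeVal natStar; split_ifs <;> first | omega | exact ‹False›.elim
          rw [hi]
          unfold primeVal natStar; split_ifs <;> first | omega | exact ‹False›.elim
    exact fun k hk => (key k).1 hk
  have hXend : (((bckPair (primeOp hn) x0 y0 (n - 2)).1 : Fin (n + 1)) : ℕ) = 1 := by
    rw [hX (n - 2) le_rfl]; omega
  refine ⟨fun k _ hk => hX k hk, hXend, hY, fun h => ?_⟩
  have := congrArg (Fin.val) h
  rw [hXend, hY (n - 2) (by omega)] at this
  omega
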